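/- Let G be a finite simple graph of order n, let λ be a positive integer, and suppose G is λ-quasi-regularizable. Then with r = ⌈(n−1)/(λ+2)⌉, the coefficients satisfy s_r ≥ s_{r+1} ≥ ⋯ ≥ s_{α(G)}; that is, s_k ≥ s_{k+1} for every k with r ≤ k < α(G). -/

import Mathlib

open Finset
open scoped Classical

variable {V : Type*}

/-- `S` is an independent set in `G`: its vertices are pairwise non-adjacent. -/
def IsIndepSet (G : SimpleGraph V) (S : Finset V) : Prop :=
  ∀ ⦃u⦄, u ∈ S → ∀ ⦃v⦄, v ∈ S → ¬ G.Adj u v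

/-- The neighborhood `N(S)`: all vertices having at least one neighbor in `S`. -/
noncomputable def neigh [Fintype V] (G : SimpleGraph V) (S : Finset V) : Finset V :=
  Finset.univ.filter fun v => ∃ u ∈ S, G.Adj u v

/-- The independence number `α(G)`: the maximum size of an independent set. -/
noncomputable def indepNum [Fintype V] (G : SimpleGraph V) : ℕ :=
  (Finset.univ.filter fun S : Finset V => IsIndepSet G S).sup Finset.card

/-- `s_k`: the number of independent sets of size `k` in `G`. -/
noncomputable def indepCount [Fintype V] (G : SimpleGraph V) (k : ℕ) : ℕ :=
  (Finset.univ.filter fun S : Finset V => IsIndepSet G S ∧ S.card = k).card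

/-- A maximal independent set (not properly contained in another independent set). -/
def IsMaximalIndepSet (G : SimpleGraph V) (S : Finset V) : Prop :=
  IsIndepSet G S ∧ ∀ T : Finset V, IsIndepSet G T → S ⊆ T → S = T

/-- `G` is well-covered: all maximal independent sets have the same cardinality. -/
def IsWellCovered (G : SimpleGraph V) : Prop :=
  ∀ S T : Finset V, IsMaximalIndepSet G S → IsMaximalIndepSet G T → S.card = T.card

/-- `G` is 1-well-covered: it is well-covered, has at least two vertices, and
deleting any vertex leaves a well-covered graph. -/
def IsOneWellCovered [Fintype V] (G : SimpleGraph V) : Prop :=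
  IsWellCovered G ∧ 2 ≤ Fintype.card V ∧
    ∀ v : V, IsWellCovered (G.induce ({v}ᶜ : Set V))

/-- The corona `H ∘ K₂`: for each vertex `v` of `H`, two new vertices
(`(v, false)` and `(v, true)`) adjacent to each other and to `v` are added. -/
def corona2 (H : SimpleGraph V) : SimpleGraph (V ⊕ V × Bool) :=
  SimpleGraph.fromRel fun x y =>
    match x, y with
    | Sum.inl u, Sum.inl v => H.Adj u v
    | Sum.inl u, Sum.inr (v, _) => u = v
    | Sum.inr (u, _), Sum.inr (v, _) => u = v
    | _, _ => False

/-- If `G` is a `λ`-quasi-regularizable graph of order `n`, then with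
`r = ⌈(n−1)/(λ+2)⌉` we have `s_r ≥ s_{r+1} ≥ ⋯ ≥ s_{α(G)}`. -/
theorem stmt_1 {V : Type*} [Fintype V] (G : SimpleGraph V) (n : ℕ)
    (hn : Fintype.card V = n) (lam : ℕ) (hlam : 0 < lam)
    (hqr : ∀ S : Finset V, IsIndepSet G S → lam * S.card ≤ (neigh G S).card)
    (r : ℕ) (hr : r = (n - 1 + (lam + 2) - 1) / (lam + 2)) :
    ∀ k : ℕ, r ≤ k → k < indepNum G → indepCount G (k + 1) ≤ indepCount G k := by
  intro k hk _
  -- arithmetic: n ≤ (lam+2)*k + 1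
  have hnk : n ≤ (lam + 2) * k + 1 := by
    have hb0 : 0 < lam + 2 := by omega
    have hd := Nat.div_add_mod (n - 1 + (lam + 2) - 1) (lam + 2)
    have hm := Nat.mod_lt (n - 1 + (lam + 2) - 1) hb0
    have hmul := Nat.mul_le_mul_left (lam + 2) hk
    have hexp : (lam + 2) * k = lam * k + 2 * k := by ring
    rw [← hr] at hd
    -- (lam+2) * r + mod = n - 1 + (lam+2) - 1, mod < lam+2, so n - 1 ≤ (lam+2)*r
    omega
  set Sk := univ.filter (fun S : Finset V => IsIndepSet G S ∧ S.card = k) with hSk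
  set Sk1 := univ.filter (fun S : Finset V => IsIndepSet G S ∧ S.card = k + 1) with hSk1
  have stepA : ∀ A ∈ Sk1, (Sk.filter (fun B => B ⊆ A)).card = k + 1 := by
    intro A hA
    simp only [hSk1, mem_filter, mem_univ, true_and] at hA
    have heq : Sk.filter (fun B => B ⊆ A) = A.powersetCard k := by
      ext B
      simp only [hSk, mem_filter, mem_univ, true_and, Finset.mem_powersetCard]
      constructor
      · rintro ⟨⟨_, hc⟩, hs⟩; exact ⟨hs, hc⟩
      · rintro ⟨hs, hc⟩
        exact ⟨⟨fun u hu v hv => hA.1 (hs hu) (hs hv), hc⟩, hs⟩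
    rw [heq, Finset.card_powersetCard, hA.2, Nat.choose_succ_self_right]
  have stepB : ∀ B ∈ Sk, (Sk1.filter (fun A => B ⊆ A)).card ≤ k + 1 := by
    intro B hB
    simp only [hSk, mem_filter, mem_univ, true_and] at hB
    obtain ⟨hBi, hBc⟩ := hB
    have hdisj : Disjoint B (neigh G B) := by
      rw [Finset.disjoint_left]
      intro v hv hvn
      simp only [neigh, mem_filter, mem_univ, true_and] at hvn
      obtain ⟨u, hu, hadj⟩ := hvn
      exact hBi hu hv hadj
    have hNB : lam * k ≤ (neigh G B).card := by
      have := hqr B hBi; rwa [hBc] at this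
    have hcard : (B ∪ neigh G B).card = k + (neigh G B).card := by
      rw [Finset.card_union_of_disjoint hdisj, hBc]
    have hinj : (Sk1.filter (fun A => B ⊆ A)).card
        ≤ (((B ∪ neigh G B)ᶜ).image (fun v => ({v} : Finset V))).card := by
      apply Finset.card_le_card_of_injOn (fun A => A \ B)
      · intro A hA
        simp only [Finset.mem_coe, hSk1, mem_filter, mem_univ, true_and] at hA
        obtain ⟨⟨hAi, hAc⟩, hBA⟩ := hA
        have hc1 : (A \ B).card = 1 := by
          rw [Finset.card_sdiff_of_subset hBA, hAc, hBc]; omega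
        obtain ⟨v, hv⟩ := Finset.card_eq_one.mp hc1
        have hvmem : v ∈ A \ B := hv ▸ Finset.mem_singleton_self v
        have hvA : v ∈ A := (Finset.mem_sdiff.mp hvmem).1
        have hvB : v ∉ B := (Finset.mem_sdiff.mp hvmem).2
        simp only [Finset.mem_coe]
        rw [hv]
        apply Finset.mem_image_of_mem
        rw [Finset.mem_compl, Finset.mem_union]
        rintro (h | h)
        · exact hvB h
        · simp only [neigh, mem_filter, mem_univ, true_and] at h
          obtain ⟨u, hu, hadj⟩ := h
          exact hAi (hBA hu) hvA hadj
      · intro A1 h1 A2 h2 heq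
        simp only [coe_filter, Set.mem_setOf_eq] at h1 h2
        have e1 : B ∪ (A1 \ B) = A1 := Finset.union_sdiff_of_subset h1.2
        have e2 : B ∪ (A2 \ B) = A2 := Finset.union_sdiff_of_subset h2.2
        rw [← e1, ← e2]; exact congrArg (fun s => B ∪ s) heq
    have himg : (((B ∪ neigh G B)ᶜ).image (fun v => ({v} : Finset V))).card
        = ((B ∪ neigh G B)ᶜ).card :=
      Finset.card_image_of_injective _ (fun a b h => Finset.singleton_injective h)
    have hcompl : ((B ∪ neigh G B)ᶜ).card = Fintype.card V - (B ∪ neigh G B).card :=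
      Finset.card_compl _
    have hexp : (lam + 2) * k = lam * k + 2 * k := by ring
    omega
  have hdc : ∑ A ∈ Sk1, (Sk.filter (fun B => B ⊆ A)).card
      = ∑ B ∈ Sk, (Sk1.filter (fun A => B ⊆ A)).card := by
    simp only [Finset.card_filter]
    rw [Finset.sum_comm]
  have h1 : ∑ A ∈ Sk1, (Sk.filter (fun B => B ⊆ A)).card = (k + 1) * Sk1.card := by
    rw [Finset.sum_congr rfl stepA, Finset.sum_const, smul_eq_mul, mul_comm]
  have h2 : ∑ B ∈ Sk, (Sk1.filter (fun A => B ⊆ A)).card ≤ (k + 1) * Sk.card := by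
    calc ∑ B ∈ Sk, (Sk1.filter (fun A => B ⊆ A)).card ≤ ∑ _B ∈ Sk, (k + 1) :=
          Finset.sum_le_sum stepB
      _ = (k + 1) * Sk.card := by rw [Finset.sum_const, smul_eq_mul, mul_comm]
  have hmain : (k + 1) * Sk1.card ≤ (k + 1) * Sk.card := by
    rw [← h1, hdc]; exact h2
  have hfin := Nat.le_of_mul_le_mul_left hmain (by omega)
  have e1 : indepCount G (k + 1) = Sk1.card := rfl
  have e2 : indepCount G k = Sk.card := rfl
  rw [e1, e2]; exact hfin
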